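/- Let V be a finite-dimensional real vector space equipped with null data (γ, ℓ, ℓ⁽²⁾, P, n, n⁽²⁾ = 0) satisfying the four contraction identities, and let S ⊂ V be a codimension-one subspace with n ∉ S, so that h := γ restricted to S × S is nondegenerate. Let U be a symmetric bilinear form on V with U(n,·) = 0. Then tr_P U = tr_h U_∥, i.e., the trace of the endomorphism X ↦ P(U(X,·),·) of V equals the trace of the endomorphism of S obtained by composing the inverse of h with the restriction U_∥ of U to S × S. -/

import Mathlib

open Module

/-- The vector of `V` corresponding to `P(ρ,·) ∈ V**`, via the canonical
identification `V ≅ V**`. -/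
noncomputable def Pvec {V : Type*} [AddCommGroup V] [Module ℝ V] [FiniteDimensional ℝ V]
    (P : LinearMap.BilinForm ℝ (Module.Dual ℝ V)) (ρ : Module.Dual ℝ V) : V :=
  (Module.evalEquiv ℝ V).symm (P ρ)

/-- `tr_P T`: the trace of the endomorphism `X ↦ P(T(X,·),·)` of `V`. -/
noncomputable def trP {V : Type*} [AddCommGroup V] [Module ℝ V] [FiniteDimensional ℝ V]
    (P : LinearMap.BilinForm ℝ (Module.Dual ℝ V)) (T : LinearMap.BilinForm ℝ V) : ℝ :=
  LinearMap.trace ℝ V ((Module.evalEquiv ℝ V).symm.toLinearMap ∘ₗ P ∘ₗ T)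

lemma apply_Pvec {V : Type*} [AddCommGroup V] [Module ℝ V] [FiniteDimensional ℝ V]
    (P : LinearMap.BilinForm ℝ (Module.Dual ℝ V)) (ρ α : Module.Dual ℝ V) :
    α (Pvec P ρ) = P ρ α := by
  simp [Pvec]

/-- For null hypersurface data and a transverse codimension-one subspace `S`, and a symmetric
bilinear form `U` with `U(n,·) = 0`: there is a unique endomorphism `F` of `S` with
`h(F x, y) = U(x,y)` (i.e. `F = h⁻¹ ∘ U_∥`), and its trace equals `tr_P U`;
that is, `tr_P U = tr_h U_∥`. -/
theorem trP_eq_trh_restrict {V : Type*} [AddCommGroup V] [Module ℝ V]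
    [FiniteDimensional ℝ V]
    (γ : LinearMap.BilinForm ℝ V) (hγsym : ∀ X Y : V, γ X Y = γ Y X)
    (ℓ : Module.Dual ℝ V) (ℓ2 : ℝ)
    (P : LinearMap.BilinForm ℝ (Module.Dual ℝ V)) (hPsym : ∀ α β, P α β = P β α)
    (n : V) (n2 : ℝ) (hn2 : n2 = 0)
    (h1 : γ n + n2 • ℓ = 0)
    (h2 : ℓ n + n2 * ℓ2 = 1)
    (h3 : Pvec P ℓ + ℓ2 • n = 0)
    (h4 : ∀ X : V, Pvec P (γ X) + ℓ X • n = X)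
    (S : Submodule ℝ V)
    (hcodim : Module.finrank ℝ S + 1 = Module.finrank ℝ V) (hnS : n ∉ S)
    (U : LinearMap.BilinForm ℝ V) (hUsym : ∀ X Y : V, U X Y = U Y X)
    (hUn : U n = 0) :
    (∃! F : S →ₗ[ℝ] S, ∀ x y : S, γ (F x : V) (y : V) = U (x : V) (y : V)) ∧
    (∀ F : S →ₗ[ℝ] S, (∀ x y : S, γ (F x : V) (y : V) = U (x : V) (y : V)) →
      trP P U = LinearMap.trace ℝ S F) := by
  subst hn2
  rw [zero_smul, add_zero] at h1
  -- γ n = 0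
  -- the span of n
  set N : Submodule ℝ V := Submodule.span ℝ {n} with hN
  have hn0 : n ≠ 0 := fun h => hnS (h ▸ S.zero_mem)
  have hdisj : Disjoint S N := by
    rw [Submodule.disjoint_span_singleton]
    intro hx; exact absurd hx hnS
  have hcompl : IsCompl S N := by
    refine ⟨hdisj, ?_⟩
    rw [codisjoint_iff]
    apply Submodule.eq_top_of_finrank_eq
    have hd := Submodule.finrank_sup_add_finrank_inf_eq S N
    rw [hdisj.eq_bot] at hd
    simp only [finrank_bot, add_zero, finrank_span_singleton hn0] at hd
    rw [hd, hN, finrank_span_singleton hn0, hcodim]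
  -- the key identity : γ Y (Pvec P ρ) = ρ Y - ℓ Y * ρ n
  have key : ∀ (ρ : Module.Dual ℝ V) (Y : V),
      γ Y (Pvec P ρ) = ρ Y - ℓ Y * ρ n := by
    intro ρ Y
    have : γ Y (Pvec P ρ) = P ρ (γ Y) := apply_Pvec P ρ (γ Y)
    rw [this, hPsym]
    have : P (γ Y) ρ = ρ (Pvec P (γ Y)) := (apply_Pvec P (γ Y) ρ).symm
    rw [this]
    have h4Y := h4 Y
    have : Pvec P (γ Y) = Y - ℓ Y • n := by
      rw [eq_sub_iff_add_eq]; exact h4Y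
    rw [this]
    simp [mul_comm]
  -- the endomorphism G of V
  set G : V →ₗ[ℝ] V := (Module.evalEquiv ℝ V).symm.toLinearMap ∘ₗ P ∘ₗ U with hG
  have hGn : G n = 0 := by
    simp only [hG, LinearMap.comp_apply, LinearEquiv.coe_coe, hUn, map_zero]
  have hGkey : ∀ X Y : V, γ (G X) Y = U X Y := by
    intro X Y
    have : γ (G X) Y = γ Y (G X) := hγsym _ _
    rw [this]
    have : G X = Pvec P (U X) := rfl
    rw [this, key (U X) Y]
    have : U X n = 0 := by rw [hUsym]; rw [hUn]; rfl
    rw [this, hUsym]; ring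
  -- projection onto S along N
  set π : V →ₗ[ℝ] S := Submodule.projectionOnto S N hcompl with hπ
  have hsub : ∀ X : V, X - (π X : V) ∈ N := by
    intro X
    have : π (X - (π X : V)) = 0 := by
      rw [map_sub, hπ, Submodule.projectionOnto_apply_left, sub_self]
    rwa [Submodule.projectionOnto_apply_eq_zero_iff] at this
  -- nondegeneracy of γ restricted to S
  have hnondeg : ∀ x : S, (∀ y : S, γ (x : V) (y : V) = 0) → x = 0 := by
    intro x hx
    have hxn : γ (x : V) n = 0 := by rw [hγsym]; rw [h1]; rfl
    have hγx : γ (x : V) = 0 := by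
      ext Y
      obtain ⟨c, hc⟩ := (Submodule.mem_span_singleton.mp (hsub Y) : ∃ a : ℝ, a • n = Y - (π Y : V))
      have : Y = (π Y : V) + c • n := by rw [hc]; abel
      rw [this]
      simp [hx (π Y), hxn]
    have h4x := h4 (x : V)
    rw [hγx] at h4x
    have : Pvec P (0 : Module.Dual ℝ V) = 0 := by simp [Pvec]
    rw [this, zero_add] at h4x
    have hxN : (x : V) ∈ N := by
      rw [hN, Submodule.mem_span_singleton]; exact ⟨ℓ x, h4x⟩
    have := hdisj.le_bot ⟨x.2, hxN⟩
    ext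
    simpa using this
  -- the canonical F
  set F₀ : S →ₗ[ℝ] S := π ∘ₗ G ∘ₗ S.subtype with hF₀
  have hF₀prop : ∀ x y : S, γ (F₀ x : V) (y : V) = U (x : V) (y : V) := by
    intro x y
    obtain ⟨c, hc⟩ := (Submodule.mem_span_singleton.mp (hsub (G (x : V))) :
      ∃ a : ℝ, a • n = G (x : V) - (π (G (x : V)) : V))
    have hrw : (F₀ x : V) = G (x : V) - c • n := by
      simp only [hF₀, LinearMap.comp_apply, Submodule.subtype_apply]
      rw [hc]; abel
    rw [hrw, map_sub, map_smul]
    have hn' : γ n (y : V) = 0 := by rw [h1]; rfl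
    simp [hn', hGkey]
  have huniq : ∀ F : S →ₗ[ℝ] S,
      (∀ x y : S, γ (F x : V) (y : V) = U (x : V) (y : V)) → F = F₀ := by
    intro F hF
    refine LinearMap.ext fun x => ?_
    have hz : ∀ y : S, γ ((F x - F₀ x : S) : V) (y : V) = 0 := by
      intro y
      push_cast
      rw [map_sub, LinearMap.sub_apply, hF x y, hF₀prop x y, sub_self]
    exact sub_eq_zero.mp (hnondeg _ hz)
  refine ⟨⟨F₀, hF₀prop, huniq⟩, ?_⟩
  intro F hF
  rw [huniq F hF]
  -- trace computation
  have hGfact : G = (G ∘ₗ S.subtype) ∘ₗ π := by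
    ext X
    simp only [LinearMap.comp_apply, Submodule.subtype_apply]
    have : G (X - (π X : V)) = 0 := by
      obtain ⟨c, hc⟩ := (Submodule.mem_span_singleton.mp (hsub X) :
        ∃ a : ℝ, a • n = X - (π X : V))
      rw [← hc, map_smul, hGn, smul_zero]
    rw [map_sub, sub_eq_zero] at this
    exact this
  have : trP P U = LinearMap.trace ℝ V G := rfl
  rw [this, hGfact, LinearMap.trace_comp_comm']
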